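/- (Single-pair anytime confidence bound.) For every real α > 1/2 and every integer T ≥ 1, the probability of the event that there exists an integer n ≥ 1 such that either (n ≤ T and |μ_n − p| > √(α·ln T / n)) or (n > T and |μ_n − p| > √(α·ln n / n)) is at most 4α / ((2α−1)·T^{2α−1}). -/

import Mathlib

open MeasureTheory ProbabilityTheory Real

lemma hoeff_calc {p : ℝ} (hp0 : 0 ≤ p) (hp1 : p ≤ 1) (t : ℝ) :
    exp (-(t*p)) * (1 - p + p * exp t) ≤ exp (t^2/8) := by
  set q : ℝ → ℝ := fun t => 1 - p + p * exp t with hq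
  have hqpos : ∀ t, 0 < q t := by
    intro t
    rcases eq_or_lt_of_le hp0 with h | h
    · simp [hq, ← h]
    · have := exp_pos t
      have : 0 < p * exp t := mul_pos h (exp_pos t)
      simp only [hq]; nlinarith
  set g : ℝ → ℝ := fun t => t^2/8 + t*p - Real.log (q t) with hg
  set g' : ℝ → ℝ := fun t => t/4 + p - p * exp t / q t with hg'
  have hd : ∀ t, HasDerivAt g (g' t) t := by
    intro t
    have h1 : HasDerivAt (fun t : ℝ => t^2/8 + t*p) (t/4 + p) t := by
      have := ((hasDerivAt_pow 2 t).div_const 8).add ((hasDerivAt_id t).mul_const p)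
      exact this.congr_deriv (by rw [show (2:ℕ) - 1 = 1 from rfl]; push_cast; ring)
    have hq' : HasDerivAt q (p * exp t) t := by
      have := ((Real.hasDerivAt_exp t).const_mul p).const_add (1 - p)
      simpa [hq] using this
    have h2 : HasDerivAt (fun t => Real.log (q t)) (p * exp t / q t) t :=
      hq'.log (hqpos t).ne'
    exact h1.sub h2
  have hd' : ∀ t, HasDerivAt g' (1/4 - p * exp t * (1-p) / (q t)^2) t := by
    intro t
    have h1 : HasDerivAt (fun t : ℝ => t/4 + p) (1/4) t := by
      simpa using ((hasDerivAt_id t).div_const 4).add_const p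
    have hq' : HasDerivAt q (p * exp t) t := by
      have := ((Real.hasDerivAt_exp t).const_mul p).const_add (1 - p)
      simpa [hq] using this
    have hnum : HasDerivAt (fun t => p * exp t) (p * exp t) t :=
      (Real.hasDerivAt_exp t).const_mul p
    have h2 : HasDerivAt (fun t => p * exp t / q t)
        ((p * exp t * q t - p * exp t * (p * exp t)) / (q t)^2) t :=
      hnum.div hq' (hqpos t).ne'
    have : HasDerivAt g' (1/4 - (p * exp t * q t - p * exp t * (p * exp t)) / (q t)^2) t :=
      h1.sub h2
    convert this using 2
    rw [show q t = 1 - p + p * exp t from rfl]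
    ring
  have hg''nonneg : ∀ t, 0 ≤ 1/4 - p * exp t * (1-p) / (q t)^2 := by
    intro t
    rw [sub_nonneg, div_le_iff₀ (pow_pos (hqpos t) 2)]
    have : q t = 1 - p + p * exp t := rfl
    rw [this]
    nlinarith [sq_nonneg ((1-p) - p * exp t), exp_pos t]
  have hg'mono : Monotone g' := by
    apply monotone_of_deriv_nonneg
    · exact fun t => (hd' t).differentiableAt
    · intro t
      rw [(hd' t).deriv]
      exact hg''nonneg t
  have hg'0 : g' 0 = 0 := by
    simp [hg', hq]
  have hgnonneg : ∀ t, 0 ≤ g t := by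
    have hg0 : g 0 = 0 := by simp [hg, hq]
    intro t
    rcases le_total 0 t with h | h
    · have : MonotoneOn g (Set.Ici (0:ℝ)) := by
        apply monotoneOn_of_deriv_nonneg (convex_Ici 0)
        · exact (Differentiable.continuous (fun t => (hd t).differentiableAt)).continuousOn
        · intro x _; exact (hd x).differentiableAt.differentiableWithinAt
        · intro x hx
          rw [(hd x).deriv]
          rw [← hg'0]
          exact hg'mono (le_of_lt (by simpa using hx))
      have := this (Set.self_mem_Ici) (Set.mem_Ici.2 h) h
      rwa [hg0] at this
    · have : AntitoneOn g (Set.Iic (0:ℝ)) := by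
        apply antitoneOn_of_deriv_nonpos (convex_Iic 0)
        · exact (Differentiable.continuous (fun t => (hd t).differentiableAt)).continuousOn
        · intro x _; exact (hd x).differentiableAt.differentiableWithinAt
        · intro x hx
          rw [(hd x).deriv, ← hg'0]
          exact hg'mono (le_of_lt (by simpa using hx))
      have := this (Set.mem_Iic.2 h) (Set.self_mem_Iic) h
      rwa [hg0] at this
  have h := hgnonneg t
  have hlog : Real.log (q t) ≤ t^2/8 + t*p := by
    simp only [hg] at h; linarith
  have : q t ≤ exp (t^2/8 + t*p) := by
    calc q t = exp (Real.log (q t)) := (exp_log (hqpos t)).symm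
    _ ≤ _ := exp_le_exp.2 hlog
  calc exp (-(t*p)) * q t ≤ exp (-(t*p)) * exp (t^2/8 + t*p) := by
        exact mul_le_mul_of_nonneg_left this (exp_pos _).le
    _ = exp (t^2/8) := by rw [← exp_add]; ring_nf

lemma mvt_tail {s : ℝ} (hs : 1 < s) {a : ℝ} (ha : 1 ≤ a) :
    (s - 1) * (a + 1) ^ (-s) ≤ a ^ (1 - s) - (a + 1) ^ (1 - s) := by
  have ha0 : 0 < a := lt_of_lt_of_le one_pos ha
  have hab : a < a + 1 := by linarith
  obtain ⟨c, hc, hceq⟩ := exists_hasDerivAt_eq_slope (fun x => x ^ (1 - s))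
    (fun x => (1 - s) * x ^ (1 - s - 1)) hab
    (by
      apply ContinuousOn.rpow_const continuousOn_id
      intro x hx; left; exact (lt_of_lt_of_le ha0 hx.1).ne')
    (fun x hx => Real.hasDerivAt_rpow_const (Or.inl (lt_of_lt_of_le ha0 (le_of_lt hx.1)).ne'))
  have hc0 : 0 < c := lt_trans ha0 hc.1
  have h1 : (a+1) ^ (1-s) - a ^ (1-s) = (1 - s) * c ^ (-s) := by
    have : (1 - s) * c ^ (1 - s - 1) = ((a+1) ^ (1-s) - a ^ (1-s)) / (a + 1 - a) := hceq
    rw [show (1:ℝ) - s - 1 = -s by ring] at this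
    rw [this]; ring_nf
  have h2 : (a + 1) ^ (-s) ≤ c ^ (-s) :=
    Real.rpow_le_rpow_of_nonpos hc0 hc.2.le (by linarith)
  nlinarith [Real.rpow_pos_of_pos hc0 (-s)]

lemma series_bound {α : ℝ} (hα : 1 / 2 < α) {T : ℕ} (hT : 1 ≤ T) (N : ℕ) :
    ∑ n ∈ Finset.range N, 2 * ((max T (n+1) : ℕ) : ℝ) ^ (-(2*α))
      ≤ 4 * α / ((2 * α - 1) * (T : ℝ) ^ (2 * α - 1)) := by
  set s : ℝ := 2 * α with hsdef
  have hs : 1 < s := by simp [hsdef]; linarith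
  have ht1 : (1:ℝ) ≤ (T:ℝ) := by exact_mod_cast hT
  have ht0 : (0:ℝ) < (T:ℝ) := lt_of_lt_of_le one_pos ht1
  set c : ℕ → ℝ := fun m => ((m:ℝ)) ^ (1 - s) / (s - 1) with hc
  have key : ∀ N : ℕ, ∑ n ∈ Finset.range N, 2 * ((max T (n+1) : ℕ) : ℝ) ^ (-s)
      ≤ 2 * (T:ℝ) ^ (-s) * (min N T : ℕ) + 2 * (c T - c (max N T)) := by
    intro N
    induction N with
    | zero => simp
    | succ N ih =>
      rw [Finset.sum_range_succ]
      rcases le_or_gt (N + 1) T with h | h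
      · have hmax : max T (N+1) = T := max_eq_left h
        have hmaxN : max N T = T := max_eq_right (by omega)
        have hmaxN1 : max (N+1) T = T := max_eq_right h
        have hminN : min N T = N := min_eq_left (by omega)
        have hminN1 : min (N+1) T = N+1 := min_eq_left h
        rw [hmax, hmaxN1, hminN1]
        rw [hmaxN, hminN] at ih
        push_cast
        push_cast at ih
        nlinarith [Real.rpow_pos_of_pos ht0 (-s)]
      · have hNT : T ≤ N := by omega
        have hmax : max T (N+1) = N+1 := max_eq_right (by omega)
        have hmaxN : max N T = N := max_eq_left hNT
        have hmaxN1 : max (N+1) T = N+1 := max_eq_left (by omega)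
        have hminN : min N T = T := min_eq_right hNT
        have hminN1 : min (N+1) T = T := min_eq_right (by omega)
        rw [hmax, hmaxN1, hminN1]
        rw [hmaxN, hminN] at ih
        have hstep : ((N+1 : ℕ) : ℝ) ^ (-s) ≤ c N - c (N+1) := by
          have hN1 : (1:ℝ) ≤ (N:ℝ) := by
            have : 1 ≤ N := le_trans hT hNT
            exact_mod_cast this
          have := mvt_tail hs hN1
          rw [hc]
          push_cast
          rw [div_sub_div_same, le_div_iff₀ (by linarith : (0:ℝ) < s - 1)]
          linarith [this]
        push_cast
        push_cast at ih hstep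
        linarith
  have hfin : ∀ N, 2 * (T:ℝ) ^ (-s) * (min N T : ℕ) + 2 * (c T - c (max N T))
      ≤ 4 * α / ((2 * α - 1) * (T : ℝ) ^ (2 * α - 1)) := by
    intro N
    have h1 : ((min N T : ℕ) : ℝ) ≤ (T:ℝ) := by exact_mod_cast min_le_right N T
    have h2 : (0:ℝ) ≤ c (max N T) := by
      rw [hc]
      exact div_nonneg (Real.rpow_nonneg (by positivity) _) (by linarith)
    have hcT : c T = (T:ℝ) ^ (1 - s) / (s - 1) := rfl
    have hrp : (0:ℝ) < (T:ℝ) ^ (-s) := Real.rpow_pos_of_pos ht0 _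
    have hmul : (T:ℝ) ^ (-s) * (T:ℝ) = (T:ℝ) ^ (1 - s) := by
      rw [show (1:ℝ) - s = -s + 1 by ring, Real.rpow_add ht0, Real.rpow_one]
    have hinv : (T:ℝ) ^ (1 - s) = ((T:ℝ) ^ (s - 1))⁻¹ := by
      rw [show (1:ℝ) - s = -(s-1) by ring, Real.rpow_neg ht0.le]
    have hrp2 : (0:ℝ) < (T:ℝ) ^ (s - 1) := Real.rpow_pos_of_pos ht0 _
    have hA : (0:ℝ) < (T:ℝ)^(2*α-1) := Real.rpow_pos_of_pos ht0 _
    have h1s : (T:ℝ)^(1-s) = ((T:ℝ)^(2*α-1))⁻¹ := by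
      rw [hsdef, show (1:ℝ)-2*α = -(2*α-1) by ring, Real.rpow_neg ht0.le]
    have hgoal : 4 * α / ((2 * α - 1) * (T : ℝ) ^ (2 * α - 1))
        = 2 * (T:ℝ)^(1-s) + 2 * (T:ℝ)^(1-s)/(s-1) := by
      rw [h1s, hsdef]
      have hA' : ((T:ℝ)^(2*α-1)) ≠ 0 := hA.ne'
      have h2a : (2*α - 1) ≠ 0 := by linarith
      have h2b : α * 2 - 1 ≠ 0 := by linarith
      field_simp
      ring
    rw [hgoal]
    have : 2 * (T:ℝ) ^ (-s) * ((min N T : ℕ) : ℝ) ≤ 2 * (T:ℝ)^(1-s) := by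
      rw [← hmul]; nlinarith
    have hcTval : 2 * (c T - c (max N T)) ≤ 2 * (T:ℝ)^(1-s)/(s-1) := by
      rw [hcT]
      have : (T:ℝ) ^ (1-s) / (s-1) - c (max N T) ≤ (T:ℝ)^(1-s)/(s-1) := by linarith
      calc 2 * ((T:ℝ) ^ (1-s) / (s-1) - c (max N T)) ≤ 2 * ((T:ℝ)^(1-s)/(s-1)) := by linarith
        _ = 2 * (T:ℝ)^(1-s)/(s-1) := by ring
    linarith
  exact le_trans (key N) (hfin N)

open MeasureTheory ProbabilityTheory

lemma mgf_single {Ω : Type*} [MeasurableSpace Ω] (μ : Measure Ω) [IsProbabilityMeasure μ]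
    (Y : Ω → ℝ) (hm : Measurable Y) (hr : ∀ ω, Y ω ∈ Set.Icc (0:ℝ) 1)
    (p : ℝ) (hp : p ∈ Set.Icc (0:ℝ) 1) (hmean : ∫ ω, Y ω ∂μ = p) (t : ℝ) :
    mgf (fun ω => Y ω - p) μ t ≤ exp (t^2/8) := by
  have hYint : Integrable Y μ := by
    refine Integrable.mono' (integrable_const 1) hm.aestronglyMeasurable ?_
    exact Filter.Eventually.of_forall fun ω => by
      rw [Real.norm_eq_abs, abs_le]; exact ⟨by linarith [(hr ω).1], (hr ω).2⟩
  have hint : Integrable (fun ω => exp (t * Y ω)) μ := by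
    refine Integrable.mono' (integrable_const (exp |t|)) ?_ ?_
    · exact (hm.const_mul t).exp.aestronglyMeasurable
    · refine Filter.Eventually.of_forall fun ω => ?_
      rw [Real.norm_eq_abs, abs_of_pos (exp_pos _), exp_le_exp]
      calc t * Y ω ≤ |t * Y ω| := le_abs_self _
        _ = |t| * |Y ω| := abs_mul _ _
        _ ≤ |t| * 1 := by
            refine mul_le_mul_of_nonneg_left ?_ (abs_nonneg t)
            rw [abs_le]; exact ⟨by linarith [(hr ω).1], (hr ω).2⟩
        _ = |t| := mul_one _
  have key : ∫ ω, exp (t * Y ω) ∂μ ≤ 1 - p + p * exp t := by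
    have hmono : ∀ ω, exp (t * Y ω) ≤ 1 - Y ω + Y ω * exp t := by
      intro ω
      have hx := hr ω
      have := convexOn_exp.2 (Set.mem_univ (0:ℝ)) (Set.mem_univ t)
        (by linarith [hx.2] : (0:ℝ) ≤ 1 - Y ω) hx.1 (by ring)
      simpa [smul_eq_mul, mul_comm] using this
    calc ∫ ω, exp (t * Y ω) ∂μ ≤ ∫ ω, (1 + Y ω * (exp t - 1)) ∂μ := by
          refine integral_mono hint ?_ (fun ω => (hmono ω).trans_eq (by ring))
          exact (integrable_const 1).add (hYint.mul_const _)
      _ = 1 - p + p * exp t := by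
          rw [integral_add (integrable_const 1) (hYint.mul_const _),
            integral_mul_const, hmean, integral_const]
          simp; ring
  calc mgf (fun ω => Y ω - p) μ t = exp (-(t*p)) * ∫ ω, exp (t * Y ω) ∂μ := by
        rw [mgf, ← integral_const_mul]
        congr 1 with ω
        rw [← exp_add]; ring_nf
    _ ≤ exp (-(t*p)) * (1 - p + p * exp t) := by
        exact mul_le_mul_of_nonneg_left key (exp_pos _).le
    _ ≤ exp (t^2/8) := hoeff_calc hp.1 hp.2 t

lemma chernoff_abs {Ω : Type*} [MeasurableSpace Ω] (μ : Measure Ω) [IsProbabilityMeasure μ]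
    (X : ℕ → Ω → ℝ) (p : ℝ) (hp : p ∈ Set.Icc (0 : ℝ) 1)
    (hmeas : ∀ n, Measurable (X n))
    (hrange : ∀ n ω, X n ω ∈ Set.Icc (0 : ℝ) 1)
    (hindep : iIndepFun X μ)
    (hident : ∀ n, IdentDistrib (X n) (X 0) μ μ)
    (hmean : ∫ ω, X 0 ω ∂μ = p)
    (n : ℕ) (ε : ℝ) (hε : 0 ≤ ε) :
    μ {ω | (n:ℝ) * ε ≤ |∑ k ∈ Finset.range n, (X k ω - p)|}
      ≤ ENNReal.ofReal (2 * exp (-2 * n * ε^2)) := by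
  set Y : ℕ → Ω → ℝ := fun k ω => X k ω - p with hY
  have hYmeas : ∀ k, Measurable (Y k) := fun k => (hmeas k).sub measurable_const
  have hYindep : iIndepFun Y μ :=
    hindep.comp (fun _ x => x - p) (fun _ => measurable_id.sub measurable_const)
  have hmeanY : ∀ k, ∫ ω, X k ω ∂μ = p := fun k => by
    rw [(hident k).integral_eq, hmean]
  have hmgf : ∀ (k : ℕ) (t : ℝ), mgf (Y k) μ t ≤ exp (t^2/8) := fun k t =>
    mgf_single μ (X k) (hmeas k) (hrange k) p hp (hmeanY k) t
  set S : Ω → ℝ := fun ω => ∑ k ∈ Finset.range n, (X k ω - p) with hS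
  have hSsum : S = ∑ k ∈ Finset.range n, Y k := by
    ext ω; simp [hS, hY, Finset.sum_apply]
  have hint : ∀ (t : ℝ), Integrable (fun ω => exp (t * S ω)) μ := by
    intro t
    refine Integrable.mono' (integrable_const (exp (|t| * n))) ?_ ?_
    · exact Measurable.aestronglyMeasurable (by
        exact (measurable_const.mul (Finset.measurable_sum _ (fun k _ => (hmeas k).sub measurable_const))).exp)
    · refine Filter.Eventually.of_forall fun ω => ?_
      rw [Real.norm_eq_abs, abs_of_pos (exp_pos _), exp_le_exp]
      calc t * S ω ≤ |t * S ω| := le_abs_self _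
        _ = |t| * |S ω| := abs_mul _ _
        _ ≤ |t| * n := by
            refine mul_le_mul_of_nonneg_left ?_ (abs_nonneg t)
            calc |S ω| ≤ ∑ k ∈ Finset.range n, |X k ω - p| :=
                  Finset.abs_sum_le_sum_abs _ _
              _ ≤ ∑ k ∈ Finset.range n, 1 := by
                  refine Finset.sum_le_sum fun k _ => ?_
                  rw [abs_le]
                  constructor <;> nlinarith [(hrange k ω).1, (hrange k ω).2, hp.1, hp.2]
              _ = n := by simp
  have hmgfS : ∀ t : ℝ, mgf S μ t ≤ exp (n * t^2/8) := by
    intro t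
    rw [hSsum, hYindep.mgf_sum hYmeas]
    calc ∏ k ∈ Finset.range n, mgf (Y k) μ t ≤ ∏ k ∈ Finset.range n, exp (t^2/8) :=
          Finset.prod_le_prod (fun k _ => mgf_nonneg) (fun k _ => hmgf k t)
      _ = exp (n * t^2/8) := by
          rw [Finset.prod_const, ← exp_nat_mul]
          congr 1; rw [Finset.card_range]; ring
  -- upper tail
  have hup : (μ {ω | (n:ℝ)*ε ≤ S ω}).toReal ≤ exp (-2 * n * ε^2) := by
    calc (μ {ω | (n:ℝ)*ε ≤ S ω}).toReal
        ≤ exp (-(4*ε) * ((n:ℝ)*ε)) * mgf S μ (4*ε) :=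
          measure_ge_le_exp_mul_mgf ((n:ℝ)*ε) (by positivity) (hint (4*ε))
      _ ≤ exp (-(4*ε) * ((n:ℝ)*ε)) * exp (n * (4*ε)^2/8) :=
          mul_le_mul_of_nonneg_left (hmgfS (4*ε)) (exp_pos _).le
      _ = exp (-2 * n * ε^2) := by rw [← exp_add]; congr 1; ring
  have hlo : (μ {ω | S ω ≤ -((n:ℝ)*ε)}).toReal ≤ exp (-2 * n * ε^2) := by
    calc (μ {ω | S ω ≤ -((n:ℝ)*ε)}).toReal
        ≤ exp (-(-(4*ε)) * (-((n:ℝ)*ε))) * mgf S μ (-(4*ε)) :=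
          measure_le_le_exp_mul_mgf _ (by simp; positivity) (hint _)
      _ ≤ exp (-(-(4*ε)) * (-((n:ℝ)*ε))) * exp (n * (-(4*ε))^2/8) :=
          mul_le_mul_of_nonneg_left (hmgfS _) (exp_pos _).le
      _ = exp (-2 * n * ε^2) := by rw [← exp_add]; congr 1; ring
  have hsub : {ω | (n:ℝ) * ε ≤ |∑ k ∈ Finset.range n, (X k ω - p)|}
      ⊆ {ω | (n:ℝ)*ε ≤ S ω} ∪ {ω | S ω ≤ -((n:ℝ)*ε)} := by
    intro ω hω
    simp only [Set.mem_setOf_eq] at hω ⊢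
    rcases le_abs.mp hω with h | h
    · exact Or.inl h
    · refine Or.inr ?_
      show S ω ≤ -((n:ℝ)*ε)
      have hSe : S ω = ∑ k ∈ Finset.range n, (X k ω - p) := rfl
      linarith
  calc μ {ω | (n:ℝ) * ε ≤ |∑ k ∈ Finset.range n, (X k ω - p)|}
      ≤ μ {ω | (n:ℝ)*ε ≤ S ω} + μ {ω | S ω ≤ -((n:ℝ)*ε)} :=
        (measure_mono hsub).trans (measure_union_le _ _)
    _ ≤ ENNReal.ofReal (exp (-2 * n * ε^2)) + ENNReal.ofReal (exp (-2 * n * ε^2)) := by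
        refine add_le_add ?_ ?_ <;>
          exact (ENNReal.le_ofReal_iff_toReal_le (measure_ne_top μ _) (exp_pos _).le).2
            (by assumption)
    _ = ENNReal.ofReal (2 * exp (-2 * n * ε^2)) := by
        rw [← ENNReal.ofReal_add (exp_pos _).le (exp_pos _).le]; congr 1; ring

/-- single-pair anytime confidence bound: For every real `α > 1/2` and every
integer `T ≥ 1`, the probability of the event that there exists an integer `n ≥ 1` such that
either (`n ≤ T` and `|μ_n − p| > √(α·ln T / n)`) or (`n > T` and `|μ_n − p| > √(α·ln n / n)`)
is at most `4α / ((2α−1)·T^{2α−1})`.  Here `X k` is the `(k+1)`-st sample of an i.i.d.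
sequence of `[0,1]`-valued random variables with mean `p`, and `μ_n` is the empirical mean of
the first `n` samples. -/
theorem stmt_9 {Ω : Type*} [MeasurableSpace Ω] (μ : Measure Ω) [IsProbabilityMeasure μ]
    (X : ℕ → Ω → ℝ) (p : ℝ) (hp : p ∈ Set.Icc (0 : ℝ) 1)
    (hmeas : ∀ n, Measurable (X n))
    (hrange : ∀ n ω, X n ω ∈ Set.Icc (0 : ℝ) 1)
    (hindep : iIndepFun X μ)
    (hident : ∀ n, IdentDistrib (X n) (X 0) μ μ)
    (hmean : ∫ ω, X 0 ω ∂μ = p)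
    (α : ℝ) (hα : 1 / 2 < α) (T : ℕ) (hT : 1 ≤ T) :
    μ {ω | ∃ n : ℕ, 1 ≤ n ∧
        ((n ≤ T ∧ |(∑ k ∈ Finset.range n, X k ω) / n - p| > Real.sqrt (α * Real.log T / n)) ∨
         (T < n ∧ |(∑ k ∈ Finset.range n, X k ω) / n - p| > Real.sqrt (α * Real.log n / n)))}
      ≤ ENNReal.ofReal (4 * α / ((2 * α - 1) * (T : ℝ) ^ (2 * α - 1))) := by
  have hα0 : (0:ℝ) < α := by linarith
  set B : ℕ → Set Ω := fun m =>
    {ω | ((m+1 : ℕ) : ℝ) * Real.sqrt (α * Real.log ((max T (m+1) : ℕ) : ℝ) / ((m+1 : ℕ) : ℝ))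
      ≤ |∑ k ∈ Finset.range (m+1), (X k ω - p)|} with hB
  have hsub : {ω | ∃ n : ℕ, 1 ≤ n ∧
        ((n ≤ T ∧ |(∑ k ∈ Finset.range n, X k ω) / n - p| > Real.sqrt (α * Real.log T / n)) ∨
         (T < n ∧ |(∑ k ∈ Finset.range n, X k ω) / n - p| > Real.sqrt (α * Real.log n / n)))}
      ⊆ ⋃ m, B m := by
    intro ω hω
    obtain ⟨n, hn1, hcase⟩ := hω
    refine Set.mem_iUnion.2 ⟨n - 1, ?_⟩
    have hm1 : n - 1 + 1 = n := by omega
    simp only [hB, Set.mem_setOf_eq, hm1]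
    have hnpos : (0:ℝ) < (n:ℝ) := by exact_mod_cast hn1
    have hsum : ∑ k ∈ Finset.range n, (X k ω - p)
        = (∑ k ∈ Finset.range n, X k ω) - n * p := by
      rw [Finset.sum_sub_distrib]; simp
    have habs : |(∑ k ∈ Finset.range n, X k ω) / n - p|
        = |∑ k ∈ Finset.range n, (X k ω - p)| / (n:ℝ) := by
      rw [hsum, ← abs_of_pos hnpos, ← abs_div]
      congr 1
      field_simp
      rw [abs_of_pos hnpos]; ring
    have hlt : Real.sqrt (α * Real.log ((max T n : ℕ) : ℝ) / (n:ℝ))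
        < |∑ k ∈ Finset.range n, (X k ω - p)| / (n:ℝ) := by
      rcases hcase with ⟨hnT, hgt⟩ | ⟨hnT, hgt⟩
      · rw [show (max T n) = T by omega]
        rw [habs] at hgt; exact hgt
      · rw [show (max T n) = n by omega]
        rw [habs] at hgt; exact hgt
    rw [mul_comm, ← le_div_iff₀ hnpos]
    exact hlt.le
  have hper : ∀ m : ℕ, μ (B m)
      ≤ ENNReal.ofReal (2 * ((max T (m+1) : ℕ) : ℝ) ^ (-(2*α))) := by
    intro m
    set n : ℕ := m + 1 with hn
    set M : ℝ := ((max T n : ℕ) : ℝ) with hM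
    have hM1 : (1:ℝ) ≤ M := by
      rw [hM]; exact_mod_cast le_max_of_le_right (by omega : 1 ≤ n)
    have hM0 : (0:ℝ) < M := lt_of_lt_of_le one_pos hM1
    have hlogM : (0:ℝ) ≤ Real.log M := Real.log_nonneg hM1
    have hnpos : (0:ℝ) < (n:ℝ) := by positivity
    set ε : ℝ := Real.sqrt (α * Real.log M / (n:ℝ)) with hε
    have hε0 : 0 ≤ ε := Real.sqrt_nonneg _
    have hsq : ε ^ 2 = α * Real.log M / (n:ℝ) := by
      rw [hε, sq_sqrt (by positivity)]
    have hbd := chernoff_abs μ X p hp hmeas hrange hindep hident hmean n ε hε0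
    have heq : 2 * Real.exp (-2 * (n:ℝ) * ε^2) = 2 * M ^ (-(2*α)) := by
      rw [hsq, Real.rpow_def_of_pos hM0]
      congr 2
      field_simp
    rw [heq] at hbd
    exact hbd
  calc μ _ ≤ μ (⋃ m, B m) := measure_mono hsub
    _ ≤ ∑' m, μ (B m) := measure_iUnion_le _
    _ ≤ ∑' m, ENNReal.ofReal (2 * ((max T (m+1) : ℕ) : ℝ) ^ (-(2*α))) :=
        ENNReal.tsum_le_tsum hper
    _ ≤ ENNReal.ofReal (4 * α / ((2 * α - 1) * (T : ℝ) ^ (2 * α - 1))) := by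
        rw [ENNReal.tsum_eq_iSup_sum]
        refine iSup_le fun s => ?_
        obtain ⟨N, hN⟩ := s.exists_nat_subset_range
        calc ∑ m ∈ s, ENNReal.ofReal (2 * ((max T (m+1) : ℕ) : ℝ) ^ (-(2*α)))
            ≤ ∑ m ∈ Finset.range N, ENNReal.ofReal (2 * ((max T (m+1) : ℕ) : ℝ) ^ (-(2*α))) :=
              Finset.sum_le_sum_of_subset hN
          _ = ENNReal.ofReal (∑ m ∈ Finset.range N, 2 * ((max T (m+1) : ℕ) : ℝ) ^ (-(2*α))) := by
              rw [ENNReal.ofReal_sum_of_nonneg]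
              intro i _
              positivity
          _ ≤ _ := ENNReal.ofReal_le_ofReal (series_bound hα hT N)
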